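/- Call-by-value normal-form bisimilarity coincides with machine bisimilarity of call-by-value NFB machines: for all open call-by-value lambda-terms t and s, t ~nf s if and only if there exists n > max(fv(t) ∪ fv(s)) such that <t | [] | n>_ev ~m <s | [] | n>_ev. -/

import Mathlib

/-! ### The open call-by-value lambda-calculus and the CK machine -/

/-- Call-by-value lambda-terms: free variables `fvar f` (natural numbers) and
bound variables in de Bruijn representation. -/
inductive CTm
  | fvar : ℕ → CTm
  | bvar : ℕ → CTm
  | lam : CTm → CTm
  | app : CTm → CTm → CTm
  deriving DecidableEq

namespace CTm

/-- Shift the de Bruijn indices `≥ k` by `d`. -/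
def liftC (d : ℕ) : ℕ → CTm → CTm
  | _, fvar f => fvar f
  | k, bvar n => if n < k then bvar n else bvar (n + d)
  | k, lam t => lam (liftC d (k + 1) t)
  | k, app t s => app (liftC d k t) (liftC d k s)

/-- Capture-avoiding substitution of `s` for the de Bruijn index `k`. -/
def substC : CTm → ℕ → CTm → CTm
  | fvar f, _, _ => fvar f
  | bvar n, k, s => if n = k then liftC k 0 s else if k < n then bvar (n - 1) else bvar n
  | lam t, k, s => lam (substC t (k + 1) s)
  | app t u, k, s => app (substC t k s) (substC u k s)

end CTm

/-- Free variables of a term. -/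
def fvC : CTm → Finset ℕ
  | .fvar f => {f}
  | .bvar _ => ∅
  | .lam t => fvC t
  | .app t s => fvC t ∪ fvC s

/-- Values: free variables, variables, and lambda-abstractions. -/
def CIsVal : CTm → Prop
  | .app _ _ => False
  | _ => True

/-- Stack items: an argument `arg(t)` or an already evaluated function `fun(v)`. -/
inductive CItem
  | argI : CTm → CItem
  | funI : CTm → CItem

/-- Stacks of the CK machine. -/
abbrev CStack := List CItem

def fvItem : CItem → Finset ℕ
  | .argI t => fvC t
  | .funI v => fvC v

def fvSt : CStack → Finset ℕ
  | [] => ∅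
  | i :: π => fvItem i ∪ fvSt π

/-- Configurations of the CK machine: evaluation mode `<t | π>` and
continuation mode `<π | v>`. -/
inductive CKConf
  | ev : CTm → CStack → CKConf
  | cont : CStack → CTm → CKConf

/-- Transitions of the CK machine. -/
inductive CKStep : CKConf → CKConf → Prop
  | fn {t s π} : CKStep (.ev (.app t s) π) (.ev t (.argI s :: π))
  | switch {v π} : CIsVal v → CKStep (.ev v π) (.cont π v)
  | arg {t π v} : CKStep (.cont (.argI t :: π) v) (.ev t (.funI v :: π))
  | beta {t π v} : CKStep (.cont (.funI (.lam t) :: π) v) (.ev (t.substC 0 v) π)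

/-- Reflexive-transitive closure of CK transitions. -/
def CKSteps : CKConf → CKConf → Prop := Relation.ReflTransGen CKStep

/-! ### Call-by-value normal-form bisimilarity -/

/-- Call-by-value normal-form bisimulation, on CK configurations. -/
def IsNFBisimV (R : CKConf → CKConf → Prop) : Prop :=
  Symmetric R ∧ ∀ C C', R C C' →
    (∀ v, CKSteps C (.cont [] v) →
      ∃ v', CKSteps C' (.cont [] v') ∧
        ∀ f, f ∉ fvC v ∪ fvC v' →
          R (.cont [.funI v] (.fvar f)) (.cont [.funI v'] (.fvar f))) ∧
    (∀ f π v, CKSteps C (.cont (.funI (.fvar f) :: π) v) →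
      ∃ π' v', CKSteps C' (.cont (.funI (.fvar f) :: π') v') ∧
        ∀ f', f' ∉ fvC v ∪ fvC v' ∪ fvSt π ∪ fvSt π' →
          R (.cont [.funI v] (.fvar f')) (.cont [.funI v'] (.fvar f')) ∧
          R (.cont π (.fvar f')) (.cont π' (.fvar f')))

/-- Call-by-value normal-form bisimilarity. -/
def NFBisimV (C C' : CKConf) : Prop := ∃ R, IsNFBisimV R ∧ R C C'

/-! ### The call-by-value NFB machine -/

/-- Flags of the call-by-value NFB machine. -/
inductive CNFlag
  | flam | fval | fctx
  | fvarF : ℕ → CNFlag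
  deriving DecidableEq

/-- Labels of the call-by-value NFB machine. -/
inductive CNLabel
  | tau : CNLabel
  | flag : CNFlag → CNLabel

/-- Configurations of the call-by-value NFB machine; the `stuck` mode is the
intermediate state between the two flags of the `Stuck-Val` and `Stuck-Context`
steps. -/
inductive CNConf
  | ev : CTm → CStack → ℕ → CNConf
  | cont : CStack → CTm → ℕ → CNConf
  | stuck : CStack → CTm → ℕ → CNConf

/-- Transitions of the call-by-value NFB machine. -/
inductive CNStep : CNConf → CNLabel → CNConf → Prop
  | fn {t s π n} : CNStep (.ev (.app t s) π n) .tau (.ev t (.argI s :: π) n)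
  | switch {v π n} : CIsVal v → CNStep (.ev v π n) .tau (.cont π v n)
  | arg {t π v n} : CNStep (.cont (.argI t :: π) v n) .tau (.ev t (.funI v :: π) n)
  | beta {t π v n} :
      CNStep (.cont (.funI (.lam t) :: π) v n) .tau (.ev (t.substC 0 v) π n)
  | val {v n} : CNStep (.cont [] v n) (.flag .flam) (.cont [.funI v] (.fvar n) (n + 1))
  | stuckFlag {f π v n} :
      CNStep (.cont (.funI (.fvar f) :: π) v n) (.flag (.fvarF f)) (.stuck π v n)
  | stuckVal {π v n} :
      CNStep (.stuck π v n) (.flag .fval) (.cont [.funI v] (.fvar n) (n + 1))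
  | stuckCtx {π v n} :
      CNStep (.stuck π v n) (.flag .fctx) (.cont π (.fvar n) (n + 1))

/-- Silent transitions of the call-by-value NFB machine. -/
def CNTau (C C' : CNConf) : Prop := CNStep C .tau C'

/-- Flagged transitions of the call-by-value NFB machine. -/
def CNFlagStep (C : CNConf) (F : CNFlag) (C' : CNConf) : Prop := CNStep C (.flag F) C'

/-- The call-by-value NFB machine has no terminating flagged transitions. -/
def CNFinal : CNConf → CNFlag → Prop := fun _ _ => False
/-! ### Machine bisimilarity for flagged abstract machines -/

/-- Machine bisimulation for a flagged abstract machine given by silent steps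
`tstep`, flagged steps `fstep`, and terminating flagged transitions `final`. -/
def IsMachineBisim {Conf Fl : Type} (tstep : Conf → Conf → Prop)
    (fstep : Conf → Fl → Conf → Prop) (final : Conf → Fl → Prop)
    (R : Conf → Conf → Prop) : Prop :=
  Symmetric R ∧ ∀ C1 C2, R C1 C2 →
    (∀ (F : Fl) (C1' : Conf),
        (∃ C, Relation.ReflTransGen tstep C1 C ∧ fstep C F C1') →
        ∃ C2', (∃ C, Relation.ReflTransGen tstep C2 C ∧ fstep C F C2') ∧ R C1' C2') ∧
    (∀ F : Fl, (∃ C, Relation.ReflTransGen tstep C1 C ∧ final C F) →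
        ∃ C, Relation.ReflTransGen tstep C2 C ∧ final C F)

/-- Machine bisimilarity: the largest machine bisimulation. -/
def MachineBisim {Conf Fl : Type} (tstep : Conf → Conf → Prop)
    (fstep : Conf → Fl → Conf → Prop) (final : Conf → Fl → Prop)
    (C1 C2 : Conf) : Prop :=
  ∃ R, IsMachineBisim tstep fstep final R ∧ R C1 C2

/-! ### Statement 16: call-by-value normal-form bisimilarity coincides with
machine bisimilarity -/

/-! ### Auxiliary development -/

namespace NFBAux

open CTm

/-- Renaming of free variables. -/
def ren (ρ : ℕ → ℕ) : CTm → CTm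
  | .fvar f => .fvar (ρ f)
  | .bvar n => .bvar n
  | .lam t => .lam (ren ρ t)
  | .app t s => .app (ren ρ t) (ren ρ s)

lemma ren_liftC (ρ : ℕ → ℕ) (d : ℕ) : ∀ (t : CTm) (k : ℕ),
    ren ρ (liftC d k t) = liftC d k (ren ρ t)
  | .fvar f, k => rfl
  | .bvar n, k => by simp only [liftC, ren]; split <;> rfl
  | .lam t, k => by simp only [liftC, ren, ren_liftC ρ d t]
  | .app t s, k => by simp only [liftC, ren, ren_liftC ρ d t, ren_liftC ρ d s]

lemma ren_substC (ρ : ℕ → ℕ) (s : CTm) : ∀ (t : CTm) (k : ℕ),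
    ren ρ (substC t k s) = substC (ren ρ t) k (ren ρ s)
  | .fvar f, k => rfl
  | .bvar n, k => by
      simp only [substC, ren]
      split
      · exact ren_liftC ρ _ s 0
      · split <;> rfl
  | .lam t, k => by simp only [substC, ren, ren_substC ρ s t]
  | .app t u, k => by simp only [substC, ren, ren_substC ρ s t, ren_substC ρ s u]

lemma fv_liftC (d : ℕ) : ∀ (t : CTm) (k : ℕ), fvC (liftC d k t) = fvC t
  | .fvar f, k => rfl
  | .bvar n, k => by simp only [liftC]; split <;> rfl
  | .lam t, k => by simp only [liftC, fvC, fv_liftC d t]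
  | .app t s, k => by simp only [liftC, fvC, fv_liftC d t, fv_liftC d s]

lemma fv_substC (s : CTm) : ∀ (t : CTm) (k : ℕ), fvC (substC t k s) ⊆ fvC t ∪ fvC s
  | .fvar f, k => by simp [substC, fvC]
  | .bvar n, k => by
      simp only [substC]
      split
      · rw [fv_liftC]; exact Finset.subset_union_right
      · split <;> simp [fvC]
  | .lam t, k => fv_substC s t (k+1)
  | .app t u, k => by
      simp only [substC, fvC]
      refine Finset.union_subset ?_ ?_
      · exact (fv_substC s t k).trans (Finset.union_subset_union_left Finset.subset_union_left)
      · exact (fv_substC s u k).trans (Finset.union_subset_union_left Finset.subset_union_right)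

lemma ren_id (ρ : ℕ → ℕ) : ∀ t : CTm, (∀ x ∈ fvC t, ρ x = x) → ren ρ t = t
  | .fvar f, h => by simp only [ren]; rw [h f (by simp [fvC])]
  | .bvar n, _ => rfl
  | .lam t, h => by simp only [ren]; rw [ren_id ρ t h]
  | .app t s, h => by
      simp only [ren, fvC] at *
      rw [ren_id ρ t fun x hx => h x (Finset.mem_union_left _ hx),
        ren_id ρ s fun x hx => h x (Finset.mem_union_right _ hx)]

lemma isVal_ren {ρ : ℕ → ℕ} : ∀ {v : CTm}, CIsVal v → CIsVal (ren ρ v)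
  | .fvar _, _ => trivial
  | .bvar _, _ => trivial
  | .lam _, _ => trivial
  | .app _ _, h => h.elim

lemma isVal_of_ren {ρ : ℕ → ℕ} : ∀ {v : CTm}, CIsVal (ren ρ v) → CIsVal v
  | .fvar _, _ => trivial
  | .bvar _, _ => trivial
  | .lam _, _ => trivial
  | .app _ _, h => h.elim

end NFBAux
namespace NFBAux

def renI (ρ : ℕ → ℕ) : CItem → CItem
  | .argI t => .argI (ren ρ t)
  | .funI v => .funI (ren ρ v)

def renS (ρ : ℕ → ℕ) : CStack → CStack := List.map (renI ρ)

lemma renS_id (ρ : ℕ → ℕ) : ∀ π : CStack, (∀ x ∈ fvSt π, ρ x = x) → renS ρ π = π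
  | [], _ => rfl
  | i :: π, h => by
      have h1 : ∀ x ∈ fvItem i, ρ x = x := fun x hx =>
        h x (by simp [fvSt]; exact Or.inl hx)
      have h2 : renS ρ π = π := renS_id ρ π fun x hx => h x (by simp [fvSt]; exact Or.inr hx)
      cases i with
      | argI t => simp only [renS, List.map, renI] at *
                  rw [ren_id ρ t h1, h2]
      | funI v => simp only [renS, List.map, renI] at *
                  rw [ren_id ρ v h1, h2]

/-- Free variables of a CK configuration. -/
def fvCK : CKConf → Finset ℕ
  | .ev t π => fvC t ∪ fvSt π
  | .cont π v => fvC v ∪ fvSt π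

lemma fvCK_step {C D : CKConf} (h : CKStep C D) : fvCK D ⊆ fvCK C := by
  cases h with
  | fn => simp only [fvCK, fvC, fvSt, fvItem]; intro x; simp only [Finset.mem_union]; tauto
  | switch hv => simp only [fvCK]; intro x; simp only [Finset.mem_union]; tauto
  | arg => simp only [fvCK, fvSt, fvItem]; intro x; simp only [Finset.mem_union]; tauto
  | beta =>
      simp only [fvCK, fvSt, fvItem, fvC]
      intro x hx
      simp only [Finset.mem_union] at hx ⊢
      rcases hx with hx | hx
      · rcases Finset.mem_union.1 (fv_substC _ _ _ hx) with h | h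
        · tauto
        · tauto
      · tauto

lemma fvCK_steps {C D : CKConf} (h : CKSteps C D) : fvCK D ⊆ fvCK C := by
  induction h with
  | refl => exact Finset.Subset.refl _
  | tail _ h2 ih => exact (fvCK_step h2).trans ih

/-- Embed a CK configuration into the NFB machine with counter `n`. -/
def toCN : CKConf → ℕ → CNConf
  | .ev t π, n => .ev t π n
  | .cont π v, n => .cont π v n

lemma toCN_step {C D : CKConf} (n : ℕ) (h : CKStep C D) :
    CNTau (toCN C n) (toCN D n) := by
  cases h with
  | fn => exact CNStep.fn
  | switch hv => exact CNStep.switch hv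
  | arg => exact CNStep.arg
  | beta => exact CNStep.beta

lemma toCN_steps {C D : CKConf} (n : ℕ) (h : CKSteps C D) :
    Relation.ReflTransGen CNTau (toCN C n) (toCN D n) := by
  induction h with
  | refl => exact Relation.ReflTransGen.refl
  | tail _ h2 ih => exact ih.tail (toCN_step n h2)

lemma tau_toCN {C : CKConf} {n : ℕ} {Z : CNConf} (h : CNTau (toCN C n) Z) :
    ∃ D, CKStep C D ∧ Z = toCN D n := by
  cases C with
  | ev t π =>
      cases h with
      | fn => exact ⟨.ev _ (.argI _ :: _), CKStep.fn, rfl⟩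
      | switch hv => exact ⟨.cont _ _, CKStep.switch hv, rfl⟩
  | cont π v =>
      cases h with
      | arg => exact ⟨.ev _ (.funI _ :: _), CKStep.arg, rfl⟩
      | beta => exact ⟨.ev _ _, CKStep.beta, rfl⟩

lemma taus_toCN {C : CKConf} {n : ℕ} {Z : CNConf}
    (h : Relation.ReflTransGen CNTau (toCN C n) Z) :
    ∃ D, CKSteps C D ∧ Z = toCN D n := by
  induction h with
  | refl => exact ⟨C, Relation.ReflTransGen.refl, rfl⟩
  | tail _ h2 ih =>
      obtain ⟨D, hCD, rfl⟩ := ih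
      obtain ⟨E, hDE, rfl⟩ := tau_toCN h2
      exact ⟨E, hCD.tail hDE, rfl⟩

lemma flag_toCN {D : CKConf} {n : ℕ} {F : CNFlag} {Z : CNConf}
    (h : CNStep (toCN D n) (.flag F) Z) :
    (∃ v, D = .cont [] v ∧ F = .flam ∧ Z = .cont [.funI v] (.fvar n) (n+1)) ∨
    (∃ g π v, D = .cont (.funI (.fvar g) :: π) v ∧ F = .fvarF g ∧ Z = .stuck π v n) := by
  cases D with
  | ev t π => cases h
  | cont π v =>
      cases h with
      | val => exact Or.inl ⟨v, rfl, rfl, rfl⟩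
      | stuckFlag => exact Or.inr ⟨_, _, v, rfl, rfl, rfl⟩

lemma no_tau_stuck {π v n Z} (h : CNTau (.stuck π v n) Z) : False := by cases h

lemma taus_stuck {π v n Z} (h : Relation.ReflTransGen CNTau (.stuck π v n) Z) :
    Z = .stuck π v n := by
  rcases Relation.ReflTransGen.cases_head h with rfl | ⟨c, hc, _⟩
  · rfl
  · exact (no_tau_stuck hc).elim

end NFBAux
namespace NFBAux

def ctrN : CNConf → ℕ
  | .ev _ _ n => n
  | .cont _ _ n => n
  | .stuck _ _ n => n

def mapF (ρ : ℕ → ℕ) : CNFlag → CNFlag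
  | .flam => .flam
  | .fval => .fval
  | .fctx => .fctx
  | .fvarF g => .fvarF (ρ g)

def mapL (ρ : ℕ → ℕ) : CNLabel → CNLabel
  | .tau => .tau
  | .flag F => .flag (mapF ρ F)

def phi (ρ δ : ℕ → ℕ) : CNConf → CNConf
  | .ev t π n => .ev (ren ρ t) (renS ρ π) (δ n)
  | .cont π v n => .cont (renS ρ π) (ren ρ v) (δ n)
  | .stuck π v n => .stuck (renS ρ π) (ren ρ v) (δ n)

lemma ctr_mono {X Y l} (h : CNStep X l Y) : ctrN X ≤ ctrN Y := by
  cases h <;> simp [ctrN]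

lemma ctr_mono_taus {X Y} (h : Relation.ReflTransGen CNTau X Y) : ctrN X ≤ ctrN Y := by
  induction h with
  | refl => exact le_refl _
  | tail _ h2 ih => exact ih.trans (ctr_mono h2)

section Transport

variable {ρ δ : ℕ → ℕ} {b : ℕ}
variable (hρδ : ∀ k, b ≤ k → ρ k = δ k) (hδ : ∀ k, b ≤ k → δ (k+1) = δ k + 1)

lemma mapL_tau' {l} (h : mapL ρ l = .tau) : l = .tau := by
  cases l with
  | tau => rfl
  | flag F => simp [mapL] at h

include hρδ hδ

lemma phi_fwd {X Y l} (h : CNStep X l Y) (hb : b ≤ ctrN X) :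
    CNStep (phi ρ δ X) (mapL ρ l) (phi ρ δ Y) := by
  cases h with
  | fn => exact CNStep.fn
  | switch hv => exact CNStep.switch (isVal_ren hv)
  | arg => exact CNStep.arg
  | @beta t π v n =>
      have : ren ρ (t.substC 0 v) = (ren ρ t).substC 0 (ren ρ v) := ren_substC ρ v t 0
      simpa [phi, renS, renI, ren, mapL, this] using
        (CNStep.beta : CNStep (.cont (.funI (.lam (ren ρ t)) :: renS ρ π) (ren ρ v) (δ n)) .tau _)
  | @val v n =>
      simp only [phi, renS, renI, ren, mapL, mapF, List.map]
      rw [hρδ n hb, hδ n hb]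
      exact CNStep.val
  | stuckFlag => exact CNStep.stuckFlag
  | @stuckVal π v n =>
      simp only [phi, renS, renI, ren, mapL, mapF, List.map]
      rw [hρδ n hb, hδ n hb]
      exact CNStep.stuckVal
  | @stuckCtx π v n =>
      simp only [phi, renS, renI, ren, mapL, mapF, List.map]
      rw [hρδ n hb, hδ n hb]
      exact CNStep.stuckCtx

lemma phi_bwd {X Y' l'} (h : CNStep (phi ρ δ X) l' Y') (hb : b ≤ ctrN X) :
    ∃ l Y, CNStep X l Y ∧ l' = mapL ρ l ∧ Y' = phi ρ δ Y := by
  cases X with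
  | ev u σ k =>
      cases u with
      | fvar f =>
          cases h with
          | switch hv => exact ⟨.tau, .cont σ (.fvar f) k, CNStep.switch trivial, rfl, rfl⟩
      | bvar m =>
          cases h with
          | switch hv => exact ⟨.tau, .cont σ (.bvar m) k, CNStep.switch trivial, rfl, rfl⟩
      | lam u =>
          cases h with
          | switch hv => exact ⟨.tau, .cont σ (.lam u) k, CNStep.switch trivial, rfl, rfl⟩
      | app u1 u2 =>
          cases h with
          | fn => exact ⟨.tau, .ev u1 (.argI u2 :: σ) k, CNStep.fn, rfl, rfl⟩
          | switch hv => exact hv.elim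
  | cont σ w k =>
      cases σ with
      | nil =>
          cases h with
          | val =>
              refine ⟨.flag .flam, .cont [.funI w] (.fvar k) (k+1), CNStep.val, rfl, ?_⟩
              simp only [phi, renS, renI, ren, List.map]
              rw [hρδ k hb, hδ k hb]
      | cons i σ' =>
          cases i with
          | argI u =>
              cases h with
              | arg => exact ⟨.tau, .ev u (.funI w :: σ') k, CNStep.arg, rfl, rfl⟩
          | funI w0 =>
              cases w0 with
              | fvar g =>
                  cases h with
                  | stuckFlag => exact ⟨.flag (.fvarF g), .stuck σ' w k, CNStep.stuckFlag, rfl, rfl⟩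
              | bvar m => cases h
              | lam u =>
                  cases h with
                  | beta =>
                      refine ⟨.tau, .ev (u.substC 0 w) σ' k, CNStep.beta, rfl, ?_⟩
                      simp [phi, renS, ren_substC]
              | app _ _ => cases h
  | stuck σ w k =>
      cases h with
      | stuckVal =>
          refine ⟨.flag .fval, .cont [.funI w] (.fvar k) (k+1), CNStep.stuckVal, rfl, ?_⟩
          simp only [phi, renS, renI, ren, List.map]
          rw [hρδ k hb, hδ k hb]
      | stuckCtx =>
          refine ⟨.flag .fctx, .cont σ (.fvar k) (k+1), CNStep.stuckCtx, rfl, ?_⟩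
          simp only [phi, ren]
          rw [hρδ k hb, hδ k hb]

lemma phi_taus_fwd {X Z} (h : Relation.ReflTransGen CNTau X Z) (hb : b ≤ ctrN X) :
    Relation.ReflTransGen CNTau (phi ρ δ X) (phi ρ δ Z) := by
  induction h with
  | refl => exact Relation.ReflTransGen.refl
  | tail h1 h2 ih =>
      exact ih.tail (phi_fwd hρδ hδ h2 (hb.trans (ctr_mono_taus h1)))

lemma phi_taus_bwd {X Z} (h : Relation.ReflTransGen CNTau (phi ρ δ X) Z) (hb : b ≤ ctrN X) :
    ∃ W, Relation.ReflTransGen CNTau X W ∧ Z = phi ρ δ W := by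
  induction h with
  | refl => exact ⟨X, Relation.ReflTransGen.refl, rfl⟩
  | tail h1 h2 ih =>
      obtain ⟨W, hXW, rfl⟩ := ih
      obtain ⟨l, Y, hs, hl, rfl⟩ := phi_bwd hρδ hδ h2 (hb.trans (ctr_mono_taus hXW))
      cases mapL_tau' (ρ := ρ) hl.symm
      exact ⟨Y, hXW.tail hs, rfl⟩

/-- Transport of machine bisimulations along a fresh renaming. -/
lemma transport {R : CNConf → CNConf → Prop}
    (hR : IsMachineBisim CNTau CNFlagStep CNFinal R) :
    IsMachineBisim CNTau CNFlagStep CNFinal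
      (fun X' Y' => ∃ X Y, R X Y ∧ b ≤ ctrN X ∧ b ≤ ctrN Y ∧
        X' = phi ρ δ X ∧ Y' = phi ρ δ Y) := by
  obtain ⟨hsym, hcl⟩ := hR
  constructor
  · rintro X' Y' ⟨X, Y, hXY, hX, hY, rfl, rfl⟩
    exact ⟨Y, X, hsym hXY, hY, hX, rfl, rfl⟩
  · rintro _ _ ⟨X, Y, hXY, hX, hY, rfl, rfl⟩
    constructor
    · rintro F' C1' ⟨Z, hZ, hF⟩
      obtain ⟨W, hXW, rfl⟩ := phi_taus_bwd hρδ hδ hZ hX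
      have hbW : b ≤ ctrN W := hX.trans (ctr_mono_taus hXW)
      obtain ⟨l, E1, hs, hl, rfl⟩ := phi_bwd hρδ hδ hF hbW
      cases l with
      | tau => exact absurd hl (by simp [mapL])
      | flag F =>
          obtain ⟨E2, ⟨Z2, hYZ2, hZ2F⟩, hE⟩ := (hcl X Y hXY).1 F E1 ⟨W, hXW, hs⟩
          have hF' : F' = mapF ρ F := by
            simpa [mapL] using hl
          subst hF'
          refine ⟨phi ρ δ E2, ⟨phi ρ δ Z2, phi_taus_fwd hρδ hδ hYZ2 hY, ?_⟩, ?_⟩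
          · exact phi_fwd hρδ hδ hZ2F (hY.trans (ctr_mono_taus hYZ2))
          · exact ⟨E1, E2, hE, hbW.trans (ctr_mono hs),
              (hY.trans (ctr_mono_taus hYZ2)).trans (ctr_mono hZ2F), rfl, rfl⟩
    · rintro F ⟨Z, _, hfin⟩
      exact hfin.elim

end Transport

end NFBAux
namespace NFBAux

lemma NFBisimV_symm : Symmetric NFBisimV := fun _ _ ⟨R, hR, h⟩ => ⟨R, hR, hR.1 h⟩

lemma isNFB_NFBisimV : IsNFBisimV NFBisimV := by
  refine ⟨NFBisimV_symm, ?_⟩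
  rintro C C' ⟨R, hR, h⟩
  obtain ⟨h1, h2⟩ := hR.2 C C' h
  constructor
  · intro v hv
    obtain ⟨v', hv', hf⟩ := h1 v hv
    exact ⟨v', hv', fun f hfr => ⟨R, hR, hf f hfr⟩⟩
  · intro f π v hv
    obtain ⟨π', v', hv', hf⟩ := h2 f π v hv
    exact ⟨π', v', hv', fun f' hfr => ⟨⟨R, hR, (hf f' hfr).1⟩, ⟨R, hR, (hf f' hfr).2⟩⟩⟩

lemma bound_mono {C D : CKConf} {n : ℕ} (h : CKSteps C D)
    (hC : ∀ f ∈ fvCK C, f < n) : ∀ f ∈ fvCK D, f < n :=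
  fun f hf => hC f (fvCK_steps h hf)

/-- The candidate machine bisimulation built from normal-form bisimilarity. -/
def MRel : CNConf → CNConf → Prop := fun X Y =>
  (∃ C C' n, X = toCN C n ∧ Y = toCN C' n ∧ NFBisimV C C' ∧
     (∀ f ∈ fvCK C, f < n) ∧ (∀ f ∈ fvCK C', f < n)) ∨
  (∃ π π' v v' n, X = .stuck π v n ∧ Y = .stuck π' v' n ∧
     (∀ f ∈ fvC v ∪ fvSt π, f < n) ∧ (∀ f ∈ fvC v' ∪ fvSt π', f < n) ∧
     (∀ f', f' ∉ fvC v ∪ fvC v' ∪ fvSt π ∪ fvSt π' →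
       NFBisimV (.cont [.funI v] (.fvar f')) (.cont [.funI v'] (.fvar f')) ∧
       NFBisimV (.cont π (.fvar f')) (.cont π' (.fvar f'))))

lemma isMB_MRel : IsMachineBisim CNTau CNFlagStep CNFinal MRel := by
  constructor
  · rintro X Y (⟨C, C', n, rfl, rfl, h, hC, hC'⟩ | ⟨π, π', v, v', n, rfl, rfl, hb, hb', hf⟩)
    · exact Or.inl ⟨C', C, n, rfl, rfl, NFBisimV_symm h, hC', hC⟩
    · refine Or.inr ⟨π', π, v', v, n, rfl, rfl, hb', hb, fun f' hfr => ?_⟩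
      have hfr' : f' ∉ fvC v ∪ fvC v' ∪ fvSt π ∪ fvSt π' := by
        simp only [Finset.mem_union] at hfr ⊢; tauto
      exact ⟨NFBisimV_symm (hf f' hfr').1, NFBisimV_symm (hf f' hfr').2⟩
  · rintro X Y (⟨C, C', n, rfl, rfl, h, hC, hC'⟩ | ⟨π, π', v, v', n, rfl, rfl, hb, hb', hf⟩)
    · constructor
      · rintro F C1' ⟨Z, hZ, hF⟩
        obtain ⟨D, hCD, rfl⟩ := taus_toCN hZ
        rcases flag_toCN hF with ⟨v, rfl, rfl, rfl⟩ | ⟨g, π, v, rfl, rfl, rfl⟩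
        · -- flam
          obtain ⟨v', hv', hfr⟩ := (isNFB_NFBisimV.2 C C' h).1 v hCD
          refine ⟨.cont [.funI v'] (.fvar n) (n+1),
            ⟨toCN (.cont [] v') n, toCN_steps n hv', CNStep.val⟩, ?_⟩
          have hvb : ∀ f ∈ fvC v, f < n := fun f hfv =>
            bound_mono hCD hC f (by simp [fvCK, hfv])
          have hvb' : ∀ f ∈ fvC v', f < n := fun f hfv =>
            bound_mono hv' hC' f (by simp [fvCK, hfv])
          refine Or.inl ⟨.cont [.funI v] (.fvar n), .cont [.funI v'] (.fvar n), n+1,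
            rfl, rfl, hfr n ?_, ?_, ?_⟩
          · simp only [Finset.mem_union]
            rintro (hn | hn)
            · exact absurd (hvb n hn) (lt_irrefl n)
            · exact absurd (hvb' n hn) (lt_irrefl n)
          · intro f hfv
            simp only [fvCK, fvC, fvSt, fvItem, Finset.mem_union, Finset.mem_singleton,
              Finset.notMem_empty, or_false] at hfv
            rcases hfv with rfl | hfv
            · omega
            · exact (hvb f hfv).trans (Nat.lt_succ_self n)
          · intro f hfv
            simp only [fvCK, fvC, fvSt, fvItem, Finset.mem_union, Finset.mem_singleton,
              Finset.notMem_empty, or_false] at hfv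
            rcases hfv with rfl | hfv
            · omega
            · exact (hvb' f hfv).trans (Nat.lt_succ_self n)
        · -- fvarF g
          obtain ⟨π', v', hv', hfr⟩ := (isNFB_NFBisimV.2 C C' h).2 g π v hCD
          refine ⟨.stuck π' v' n,
            ⟨toCN (.cont (.funI (.fvar g) :: π') v') n, toCN_steps n hv', CNStep.stuckFlag⟩, ?_⟩
          have hvb : ∀ f ∈ fvC v ∪ fvSt π, f < n := fun f hfv =>
            bound_mono hCD hC f (by
              simp only [fvCK, fvSt, fvItem, fvC, Finset.mem_union] at hfv ⊢; tauto)
          have hvb' : ∀ f ∈ fvC v' ∪ fvSt π', f < n := fun f hfv =>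
            bound_mono hv' hC' f (by
              simp only [fvCK, fvSt, fvItem, fvC, Finset.mem_union] at hfv ⊢; tauto)
          exact Or.inr ⟨π, π', v, v', n, rfl, rfl, hvb, hvb', hfr⟩
      · rintro F ⟨Z, _, hfin⟩
        exact hfin.elim
    · constructor
      · rintro F C1' ⟨Z, hZ, hF⟩
        have hZ' := taus_stuck hZ
        subst hZ'
        have hfresh : n ∉ fvC v ∪ fvC v' ∪ fvSt π ∪ fvSt π' := by
          simp only [Finset.mem_union]
          rintro (((h1 | h1) | h1) | h1)
          · exact absurd (hb n (Finset.mem_union_left _ h1)) (lt_irrefl n)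
          · exact absurd (hb' n (Finset.mem_union_left _ h1)) (lt_irrefl n)
          · exact absurd (hb n (Finset.mem_union_right _ h1)) (lt_irrefl n)
          · exact absurd (hb' n (Finset.mem_union_right _ h1)) (lt_irrefl n)
        cases hF with
        | stuckVal =>
            refine ⟨.cont [.funI v'] (.fvar n) (n+1),
              ⟨.stuck π' v' n, Relation.ReflTransGen.refl, CNStep.stuckVal⟩, ?_⟩
            refine Or.inl ⟨.cont [.funI v] (.fvar n), .cont [.funI v'] (.fvar n), n+1,
              rfl, rfl, (hf n hfresh).1, ?_, ?_⟩
            · intro f hfv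
              simp only [fvCK, fvC, fvSt, fvItem, Finset.mem_union, Finset.mem_singleton,
                Finset.notMem_empty, or_false] at hfv
              rcases hfv with rfl | hfv
              · omega
              · exact (hb f (Finset.mem_union_left _ hfv)).trans (Nat.lt_succ_self n)
            · intro f hfv
              simp only [fvCK, fvC, fvSt, fvItem, Finset.mem_union, Finset.mem_singleton,
                Finset.notMem_empty, or_false] at hfv
              rcases hfv with rfl | hfv
              · omega
              · exact (hb' f (Finset.mem_union_left _ hfv)).trans (Nat.lt_succ_self n)
        | stuckCtx =>
            refine ⟨.cont π' (.fvar n) (n+1),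
              ⟨.stuck π' v' n, Relation.ReflTransGen.refl, CNStep.stuckCtx⟩, ?_⟩
            refine Or.inl ⟨.cont π (.fvar n), .cont π' (.fvar n), n+1,
              rfl, rfl, (hf n hfresh).2, ?_, ?_⟩
            · intro f hfv
              simp only [fvCK, fvC, Finset.mem_union, Finset.mem_singleton] at hfv
              rcases hfv with rfl | hfv
              · omega
              · exact (hb f (Finset.mem_union_right _ hfv)).trans (Nat.lt_succ_self n)
            · intro f hfv
              simp only [fvCK, fvC, Finset.mem_union, Finset.mem_singleton] at hfv
              rcases hfv with rfl | hfv
              · omega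
              · exact (hb' f (Finset.mem_union_right _ hfv)).trans (Nat.lt_succ_self n)
      · rintro F ⟨Z, _, hfin⟩
        exact hfin.elim

end NFBAux
namespace NFBAux

def ρnf (n f : ℕ) : ℕ → ℕ := fun x =>
  if x < n then x else if x = n then f else x - (n+1) + (max (n+1) (f+1))

def δnf (n f : ℕ) : ℕ → ℕ := fun x => x - (n+1) + (max (n+1) (f+1))

lemma hρδnf (n f : ℕ) : ∀ k, n+1 ≤ k → ρnf n f k = δnf n f k := by
  intro k hk
  simp only [ρnf, δnf]
  rw [if_neg (by omega), if_neg (by omega)]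

lemma hδnf (n f : ℕ) : ∀ k, n+1 ≤ k → δnf n f (k+1) = δnf n f k + 1 := by
  intro k hk; simp only [δnf]; omega

lemma ρnf_lt {n f x : ℕ} (h : x < n) : ρnf n f x = x := by
  simp only [ρnf]; rw [if_pos h]

lemma ρnf_n (n f : ℕ) : ρnf n f n = f := by
  simp [ρnf]

lemma δnf_n1 (n f : ℕ) : δnf n f (n+1) = max (n+1) (f+1) := by
  simp only [δnf]; omega

lemma phi_cont_pair {n f : ℕ} {v : CTm} (hv : ∀ x ∈ fvC v, x < n) :
    phi (ρnf n f) (δnf n f) (.cont [.funI v] (.fvar n) (n+1)) =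
      .cont [.funI v] (.fvar f) (max (n+1) (f+1)) := by
  simp only [phi, renS, renI, List.map, ren, ρnf_n, δnf_n1]
  rw [ren_id _ v fun x hx => ρnf_lt (hv x hx)]

lemma phi_cont_stack {n f : ℕ} {π : CStack} (hπ : ∀ x ∈ fvSt π, x < n) :
    phi (ρnf n f) (δnf n f) (.cont π (.fvar n) (n+1)) =
      .cont π (.fvar f) (max (n+1) (f+1)) := by
  simp only [phi, ren, ρnf_n, δnf_n1]
  rw [renS_id _ π fun x hx => ρnf_lt (hπ x hx)]

/-- The candidate normal-form bisimulation built from machine bisimilarity. -/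
def RNf : CKConf → CKConf → Prop := fun C C' =>
  ∃ n, (∀ f ∈ fvCK C, f < n) ∧ (∀ f ∈ fvCK C', f < n) ∧
    MachineBisim CNTau CNFlagStep CNFinal (toCN C n) (toCN C' n)

lemma transported {R : CNConf → CNConf → Prop}
    (hR : IsMachineBisim CNTau CNFlagStep CNFinal R) {n f : ℕ} {A₁ A₂ : CNConf}
    (hA : R A₁ A₂) (h1 : n + 1 ≤ ctrN A₁) (h2 : n + 1 ≤ ctrN A₂) :
    MachineBisim CNTau CNFlagStep CNFinal
      (phi (ρnf n f) (δnf n f) A₁) (phi (ρnf n f) (δnf n f) A₂) :=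
  ⟨_, transport (hρδnf n f) (hδnf n f) hR, A₁, A₂, hA, h1, h2, rfl, rfl⟩

lemma isNFB_RNf : IsNFBisimV RNf := by
  constructor
  · rintro C C' ⟨n, hC, hC', R, hR, hRCC'⟩
    exact ⟨n, hC', hC, R, hR, hR.1 hRCC'⟩
  · rintro C C' ⟨n, hC, hC', R, hR, hRCC'⟩
    constructor
    · -- clause (i): evaluation to a value
      intro v hv
      obtain ⟨A₂, ⟨Z2, hZ2, hZ2F⟩, hRA⟩ := (hR.2 _ _ hRCC').1 .flam
        (.cont [.funI v] (.fvar n) (n+1))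
        ⟨toCN (.cont [] v) n, toCN_steps n hv, CNStep.val⟩
      obtain ⟨D', hCD', rfl⟩ := taus_toCN hZ2
      rcases flag_toCN hZ2F with ⟨v', rfl, -, rfl⟩ | ⟨g, π', v', rfl, hFeq, rfl⟩
      swap
      · exact absurd hFeq (by simp)
      refine ⟨v', hCD', ?_⟩
      intro f hf
      have hvb : ∀ x ∈ fvC v, x < n := fun x hx =>
        bound_mono hv hC x (by simp [fvCK, hx])
      have hvb' : ∀ x ∈ fvC v', x < n := fun x hx =>
        bound_mono hCD' hC' x (by simp [fvCK, hx])
      refine ⟨max (n+1) (f+1), ?_, ?_, ?_⟩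
      · intro x hx
        simp only [fvCK, fvC, fvSt, fvItem, Finset.mem_union, Finset.mem_singleton,
          Finset.notMem_empty, or_false] at hx
        rcases hx with rfl | hx
        · omega
        · have := hvb x hx; omega
      · intro x hx
        simp only [fvCK, fvC, fvSt, fvItem, Finset.mem_union, Finset.mem_singleton,
          Finset.notMem_empty, or_false] at hx
        rcases hx with rfl | hx
        · omega
        · have := hvb' x hx; omega
      · have h1 := phi_cont_pair (f := f) hvb
        have h2 := phi_cont_pair (f := f) hvb'
        have := transported hR hRA (n := n) (f := f) (le_refl _) (le_refl _)
        rw [h1, h2] at this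
        exact this
    · -- clause (ii): evaluation to a stuck term
      intro g π v hv
      obtain ⟨A₂, ⟨Z2, hZ2, hZ2F⟩, hRA⟩ := (hR.2 _ _ hRCC').1 (.fvarF g)
        (.stuck π v n)
        ⟨toCN (.cont (.funI (.fvar g) :: π) v) n, toCN_steps n hv, CNStep.stuckFlag⟩
      obtain ⟨D', hCD', rfl⟩ := taus_toCN hZ2
      rcases flag_toCN hZ2F with ⟨v', rfl, hFeq, rfl⟩ | ⟨g', π', v', rfl, hFeq, rfl⟩
      · exact absurd hFeq (by simp)
      obtain rfl : g' = g := by cases hFeq; rfl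
      refine ⟨π', v', hCD', ?_⟩
      have hvb : ∀ x ∈ fvC v ∪ fvSt π, x < n := fun x hx =>
        bound_mono hv hC x (by
          simp only [fvCK, fvSt, fvItem, fvC, Finset.mem_union] at hx ⊢; tauto)
      have hvb' : ∀ x ∈ fvC v' ∪ fvSt π', x < n := fun x hx =>
        bound_mono hCD' hC' x (by
          simp only [fvCK, fvSt, fvItem, fvC, Finset.mem_union] at hx ⊢; tauto)
      -- the two auxiliary machine-bisimilar pairs
      obtain ⟨B₂, ⟨Z3, hZ3, hZ3F⟩, hRB⟩ := (hR.2 _ _ hRA).1 .fval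
        (.cont [.funI v] (.fvar n) (n+1))
        ⟨.stuck π v n, Relation.ReflTransGen.refl, CNStep.stuckVal⟩
      have hZ3' := taus_stuck hZ3
      subst hZ3'
      cases hZ3F with
      | stuckVal =>
      obtain ⟨B₂', ⟨Z4, hZ4, hZ4F⟩, hRB'⟩ := (hR.2 _ _ hRA).1 .fctx
        (.cont π (.fvar n) (n+1))
        ⟨.stuck π v n, Relation.ReflTransGen.refl, CNStep.stuckCtx⟩
      have hZ4' := taus_stuck hZ4
      subst hZ4'
      cases hZ4F with
      | stuckCtx =>
      intro f hf
      constructor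
      · refine ⟨max (n+1) (f+1), ?_, ?_, ?_⟩
        · intro x hx
          simp only [fvCK, fvC, fvSt, fvItem, Finset.mem_union, Finset.mem_singleton,
            Finset.notMem_empty, or_false] at hx
          rcases hx with rfl | hx
          · omega
          · have := hvb x (Finset.mem_union_left _ hx); omega
        · intro x hx
          simp only [fvCK, fvC, fvSt, fvItem, Finset.mem_union, Finset.mem_singleton,
            Finset.notMem_empty, or_false] at hx
          rcases hx with rfl | hx
          · omega
          · have := hvb' x (Finset.mem_union_left _ hx); omega
        · have h1 := phi_cont_pair (f := f) fun x hx => hvb x (Finset.mem_union_left _ hx)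
          have h2 := phi_cont_pair (f := f) fun x hx => hvb' x (Finset.mem_union_left _ hx)
          have := transported hR hRB (n := n) (f := f) (le_refl _) (le_refl _)
          rw [h1, h2] at this
          exact this
      · refine ⟨max (n+1) (f+1), ?_, ?_, ?_⟩
        · intro x hx
          simp only [fvCK, fvC, Finset.mem_union, Finset.mem_singleton] at hx
          rcases hx with rfl | hx
          · omega
          · have := hvb x (Finset.mem_union_right _ hx); omega
        · intro x hx
          simp only [fvCK, fvC, Finset.mem_union, Finset.mem_singleton] at hx
          rcases hx with rfl | hx
          · omega
          · have := hvb' x (Finset.mem_union_right _ hx); omega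
        · have h1 := phi_cont_stack (f := f) fun x hx => hvb x (Finset.mem_union_right _ hx)
          have h2 := phi_cont_stack (f := f) fun x hx => hvb' x (Finset.mem_union_right _ hx)
          have := transported hR hRB' (n := n) (f := f) (le_refl _) (le_refl _)
          rw [h1, h2] at this
          exact this

end NFBAux
/-- `t ~nf s` iff there exists `n` greater than every free variable of `t` and
`s` such that `<t | [] | n>_ev ~m <s | [] | n>_ev`. -/
theorem cbv_nf_bisim_iff_machine_bisim (t s : CTm) :
    NFBisimV (.ev t []) (.ev s []) ↔
      ∃ n : ℕ, (∀ f ∈ fvC t ∪ fvC s, f < n) ∧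
        MachineBisim CNTau CNFlagStep CNFinal (.ev t [] n) (.ev s [] n) := by
  constructor
  · intro h
    refine ⟨(fvC t ∪ fvC s).sup id + 1, fun f hf => ?_, ?_⟩
    · exact Nat.lt_succ_of_le (Finset.le_sup (f := id) hf)
    · refine ⟨NFBAux.MRel, NFBAux.isMB_MRel,
        Or.inl ⟨.ev t [], .ev s [], (fvC t ∪ fvC s).sup id + 1, rfl, rfl, h, ?_, ?_⟩⟩
      · intro f hf
        simp only [NFBAux.fvCK, fvSt, Finset.union_empty] at hf
        exact Nat.lt_succ_of_le (Finset.le_sup (f := id) (Finset.mem_union_left _ hf))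
      · intro f hf
        simp only [NFBAux.fvCK, fvSt, Finset.union_empty] at hf
        exact Nat.lt_succ_of_le (Finset.le_sup (f := id) (Finset.mem_union_right _ hf))
  · rintro ⟨n, hn, hm⟩
    refine ⟨NFBAux.RNf, NFBAux.isNFB_RNf, n, ?_, ?_, hm⟩
    · intro f hf
      simp only [NFBAux.fvCK, fvSt, Finset.union_empty] at hf
      exact hn f (Finset.mem_union_left _ hf)
    · intro f hf
      simp only [NFBAux.fvCK, fvSt, Finset.union_empty] at hf
      exact hn f (Finset.mem_union_right _ hf)
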